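/- arXiv:2308.06563 — 8 statements merged into one kernel-verified Lean document; each statement's English description precedes it below -/
import Mathlib

section
/- Let r > 0 and b_1, ..., b_s be integers with gcd(r, b_1, ..., b̂_i, ..., b_s) = 1 for all i. Suppose there is a subset I ⊆ {1,...,s} such that r divides ∑_{k∈I} b_k, gcd({b_k : k ∈ I} ∪ {r}) = 1, and gcd(b_i, r) = 1 for some i ∉ I. Then for every integer t with 1 ≤ t ≤ r - 1, we have ∑_{k=1}^s (t·b_k mod r) > r, where (a mod r) denotes the representative in {0, ..., r-1}. -/
def sylvester : ℕ → ℕ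
  | 0 => 2
  | n + 1 => sylvester n * (sylvester n - 1) + 1

theorem reid_tai_terminal_trick (m : ℕ) (r : ℤ) (hr : 0 < r) (b : Fin m → ℤ)
    (hwf : ∀ i : Fin m, Int.gcd r (Finset.gcd (Finset.univ.erase i) b) = 1)
    (I : Finset (Fin m))
    (hsum : r ∣ ∑ k ∈ I, b k)
    (hgcdI : Int.gcd r (Finset.gcd I b) = 1)
    (hi : ∃ i : Fin m, i ∉ I ∧ Int.gcd (b i) r = 1) :
    ∀ t : ℤ, 1 ≤ t → t ≤ r - 1 → (∑ k : Fin m, (t * b k) % r) > r := by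
  obtain ⟨i, hiI, hbi⟩ := hi
  intro t ht1 ht2
  have hrne : r ≠ 0 := hr.ne'
  have htpos : 0 < t := ht1
  have hrt : ¬ r ∣ t := by
    intro h
    have := Int.le_of_dvd htpos h
    omega
  have hfnn : ∀ k, 0 ≤ (t * b k) % r := fun k => Int.emod_nonneg _ hrne
  -- r divides the sum of residues over I
  have hdvd : r ∣ ∑ k ∈ I, (t * b k) % r := by
    have h0 : (∑ k ∈ I, (t * b k) % r) % r = 0 := by
      rw [← Finset.sum_int_mod, ← Finset.mul_sum]
      exact Int.emod_eq_zero_of_dvd (hsum.mul_left t)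
    exact Int.dvd_of_emod_eq_zero h0
  -- the sum of residues over I is positive
  have hne : ∑ k ∈ I, (t * b k) % r ≠ 0 := by
    intro h0
    have hall : ∀ k ∈ I, (t * b k) % r = 0 := by
      intro k hk
      exact (Finset.sum_eq_zero_iff_of_nonneg (fun k _ => hfnn k)).mp h0 k hk
    have hdvdall : ∀ k ∈ I, r ∣ t * b k := fun k hk =>
      Int.dvd_of_emod_eq_zero (hall k hk)
    have hg : r ∣ Finset.gcd I (fun k => t * b k) := Finset.dvd_gcd hdvdall
    have hmul : Finset.gcd I (fun k => t * b k) = normalize t * Finset.gcd I b := by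
      exact Finset.gcd_mul_left
    rw [hmul] at hg
    have hnt : normalize t = t := by
      simp [Int.normalize_of_nonneg htpos.le]
    rw [hnt] at hg
    have hco : IsCoprime r (Finset.gcd I b) := Int.isCoprime_iff_gcd_eq_one.mpr hgcdI
    exact hrt (hco.dvd_of_dvd_mul_right hg)
  have hIpos : r ≤ ∑ k ∈ I, (t * b k) % r := by
    refine Int.le_of_dvd ?_ hdvd
    exact lt_of_le_of_ne (Finset.sum_nonneg fun k _ => hfnn k) (Ne.symm hne)
  -- the residue at i is positive
  have hipos : 0 < (t * b i) % r := by
    rcases lt_or_eq_of_le (hfnn i) with h | h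
    · exact h
    · exfalso
      have : r ∣ t * b i := Int.dvd_of_emod_eq_zero h.symm
      have hco : IsCoprime r (b i) :=
        (Int.isCoprime_iff_gcd_eq_one.mpr hbi).symm
      exact hrt (hco.dvd_of_dvd_mul_right this)
  -- combine
  have hsub : insert i I ⊆ Finset.univ := Finset.subset_univ _
  have h1 : ∑ k ∈ insert i I, (t * b k) % r ≤ ∑ k : Fin m, (t * b k) % r :=
    Finset.sum_le_sum_of_subset_of_nonneg hsub (fun k _ _ => hfnn k)
  have h2 : ∑ k ∈ insert i I, (t * b k) % r
      = (t * b i) % r + ∑ k ∈ I, (t * b k) % r :=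
    Finset.sum_insert hiI
  omega
end

section
/- For n ≥ 2, let h = (s_{n-1} - 1)(2s_{n-1} - 3), a_i = h/s_{n-i} for 2 ≤ i ≤ n, a_1 = s_{n-1} - 1, and a_0 = s_{n-1} - 2, where s_k is the Sylvester sequence. Then a_0 + a_1 + ... + a_n = h. -/
lemma sylvester_ge_two (m : ℕ) : 2 ≤ sylvester m := by
  induction m with
  | zero => simp [sylvester]
  | succ k ih =>
    simp only [sylvester]
    have h1 : 1 ≤ sylvester k - 1 := by omega
    have := Nat.mul_le_mul ih h1
    omega

lemma sylvester_succ_ge_three (m : ℕ) : 3 ≤ sylvester (m + 1) := by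
  simp only [sylvester]
  have h2 := sylvester_ge_two m
  have h1 : 1 ≤ sylvester m - 1 := by omega
  have := Nat.mul_le_mul h2 h1
  omega

lemma sylvester_dvd_sub_one {j m : ℕ} (h : j < m) : sylvester j ∣ sylvester m - 1 := by
  induction m with
  | zero => omega
  | succ k ih =>
    have h2 := sylvester_ge_two k
    have e : sylvester (k + 1) - 1 = sylvester k * (sylvester k - 1) := by
      simp [sylvester]
    rw [e]
    rcases Nat.lt_succ_iff_lt_or_eq.mp h with h' | h'
    · exact Dvd.dvd.mul_left (ih h') _
    · subst h'; exact Dvd.intro _ rfl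

lemma sylvester_sum (m : ℕ) (hm : 1 ≤ m) :
    ∑ j ∈ Finset.range m, (sylvester m - 1) / sylvester j = sylvester m - 2 := by
  induction m with
  | zero => omega
  | succ k ih =>
    have h2 := sylvester_ge_two k
    have e : sylvester (k + 1) - 1 = sylvester k * (sylvester k - 1) := by
      simp [sylvester]
    rcases Nat.eq_zero_or_pos k with hk | hk
    · subst hk
      simp [sylvester]
    · rw [Finset.sum_range_succ]
      have step : ∀ j ∈ Finset.range k,
          (sylvester (k + 1) - 1) / sylvester j
            = sylvester k * ((sylvester k - 1) / sylvester j) := by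
        intro j hj
        rw [e, Nat.mul_div_assoc _ (sylvester_dvd_sub_one (Finset.mem_range.mp hj))]
      rw [Finset.sum_congr rfl step, ← Finset.mul_sum, ih hk, e,
        Nat.mul_div_cancel_left _ (by omega)]
      have hrec : sylvester (k + 1) = sylvester k * (sylvester k - 1) + 1 := rfl
      rw [hrec]
      obtain ⟨u, hu⟩ : ∃ u, sylvester k = u + 2 := ⟨sylvester k - 2, by omega⟩
      rw [hu]
      simp only [show u + 2 - 2 = u from by omega, show u + 2 - 1 = u + 1 from by omega]
      ring_nf
      omega

theorem canonical_weights_sum (n : ℕ) (hn : 2 ≤ n) :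
    (sylvester (n - 1) - 2) + (sylvester (n - 1) - 1)
      + ∑ i ∈ Finset.Icc 2 n,
          (sylvester (n - 1) - 1) * (2 * sylvester (n - 1) - 3) / sylvester (n - i)
      = (sylvester (n - 1) - 1) * (2 * sylvester (n - 1) - 3) := by
  have hreindex :
      ∑ i ∈ Finset.Icc 2 n,
          (sylvester (n - 1) - 1) * (2 * sylvester (n - 1) - 3) / sylvester (n - i)
        = ∑ j ∈ Finset.range (n - 1),
            (sylvester (n - 1) - 1) * (2 * sylvester (n - 1) - 3) / sylvester j := by
    refine (Finset.sum_bij' (fun j _ => n - j) (fun i _ => n - i) ?_ ?_ ?_ ?_ ?_).symm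
    · intro a ha
      simp only [Finset.mem_range] at ha
      simp only [Finset.mem_Icc]; omega
    · intro a ha
      simp only [Finset.mem_Icc] at ha
      simp only [Finset.mem_range]; omega
    · intro a ha
      simp only [Finset.mem_range] at ha
      show n - (n - a) = a
      omega
    · intro a ha
      simp only [Finset.mem_Icc] at ha
      show n - (n - a) = a
      omega
    · intro a ha
      simp only [Finset.mem_range] at ha
      rw [show n - (n - a) = a from by omega]
  rw [hreindex]
  have step : ∀ j ∈ Finset.range (n - 1),
      (sylvester (n - 1) - 1) * (2 * sylvester (n - 1) - 3) / sylvester j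
        = (2 * sylvester (n - 1) - 3) * ((sylvester (n - 1) - 1) / sylvester j) := by
    intro j hj
    rw [mul_comm (sylvester (n - 1) - 1),
      Nat.mul_div_assoc _ (sylvester_dvd_sub_one (Finset.mem_range.mp hj))]
  rw [Finset.sum_congr rfl step, ← Finset.mul_sum, sylvester_sum (n - 1) (by omega)]
  have hs3 : 3 ≤ sylvester (n - 1) := by
    rw [show n - 1 = (n - 2) + 1 from by omega]
    exact sylvester_succ_ge_three _
  obtain ⟨t, ht⟩ : ∃ t, sylvester (n - 1) = t + 3 := ⟨sylvester (n - 1) - 3, by omega⟩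
  rw [ht]
  simp only [show t + 3 - 2 = t + 1 from by omega, show t + 3 - 1 = t + 2 from by omega,
    show 2 * (t + 3) - 3 = 2 * t + 3 from by omega]
  ring
end

section
/- For n ≥ 2, (s_{n-1} - 1)(2s_{n-1} - 3) > 2^(2^(n-1)), where s_k is the Sylvester sequence. -/
lemma sylvester_lb (m : ℕ) : 2 ^ 2 ^ m ≤ sylvester (m + 1) - 1 := by
  induction m with
  | zero => simp [sylvester]
  | succ k ih =>
    have h2 : 2 ≤ sylvester (k + 1) := sylvester_ge_two (k + 1)
    have key : sylvester (k + 2) - 1 = sylvester (k + 1) * (sylvester (k + 1) - 1) := by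
      simp [sylvester]
    have : (sylvester (k + 1) - 1) * (sylvester (k + 1) - 1) ≤
        sylvester (k + 1) * (sylvester (k + 1) - 1) :=
      Nat.mul_le_mul_right _ (by omega)
    calc 2 ^ 2 ^ (k + 1) = 2 ^ 2 ^ k * 2 ^ 2 ^ k := by
          rw [← pow_add]; ring_nf
      _ ≤ (sylvester (k + 1) - 1) * (sylvester (k + 1) - 1) := Nat.mul_le_mul ih ih
      _ ≤ sylvester (k + 1) * (sylvester (k + 1) - 1) := this
      _ = sylvester (k + 2) - 1 := key.symm

theorem canonical_index_gt_doubly_exponential (n : ℕ) (hn : 2 ≤ n) :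
    (sylvester (n - 1) - 1) * (2 * sylvester (n - 1) - 3) > 2 ^ (2 ^ (n - 1)) := by
  obtain ⟨m, rfl⟩ : ∃ m, n = m + 2 := ⟨n - 2, by omega⟩
  show (sylvester (m + 1) - 1) * (2 * sylvester (m + 1) - 3) > 2 ^ 2 ^ (m + 1)
  have hlb := sylvester_lb m
  have h2 : 2 ≤ 2 ^ 2 ^ m := Nat.one_lt_two_pow (by positivity)
  have h3 : 3 ≤ sylvester (m + 1) := by omega
  have hlt : sylvester (m + 1) - 1 < 2 * sylvester (m + 1) - 3 := by omega
  calc 2 ^ 2 ^ (m + 1) = 2 ^ 2 ^ m * 2 ^ 2 ^ m := by rw [← pow_add]; ring_nf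
    _ ≤ (sylvester (m + 1) - 1) * (sylvester (m + 1) - 1) := Nat.mul_le_mul hlb hlb
    _ < (sylvester (m + 1) - 1) * (2 * sylvester (m + 1) - 3) :=
        Nat.mul_lt_mul_of_le_of_lt (le_refl _) hlt (by omega)
end

section
/- For n ≥ 3, let s_k denote the Sylvester sequence and set a_0 = (s_{n-1}-1)/2 - 1, a_1 = (s_{n-1}-1)/2, a_i = (s_{n-1}-1)(s_{n-1}-2)/(2 s_{n-i}) for 2 ≤ i ≤ n-1, and a_n = ((s_{n-1}-1)(s_{n-1}-2)/2 - 1)/2. Then all a_i are positive integers. -/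
lemma two_le_sylvester (k : ℕ) : 2 ≤ sylvester k := by
  induction k with
  | zero => simp [sylvester]
  | succ n ih =>
    have h1 : 1 ≤ sylvester n - 1 := by omega
    have := Nat.mul_le_mul ih h1
    simp only [sylvester]
    omega

lemma seven_le_sylvester (k : ℕ) (hk : 2 ≤ k) : 7 ≤ sylvester k := by
  induction k, hk using Nat.le_induction with
  | base => simp [sylvester]
  | succ m hm ih =>
    have h1 : 6 ≤ sylvester m - 1 := by omega
    have := Nat.mul_le_mul ih h1
    simp only [sylvester]
    omega

lemma sylvester_sub_one (n : ℕ) :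
    sylvester n - 1 = ∏ k ∈ Finset.range n, sylvester k := by
  induction n with
  | zero => simp [sylvester]
  | succ m ih =>
    have h := two_le_sylvester m
    rw [Finset.prod_range_succ, ← ih]
    simp only [sylvester]
    rw [Nat.add_sub_cancel, mul_comm]

lemma odd_sylvester (k : ℕ) (hk : 1 ≤ k) : Odd (sylvester k) := by
  obtain ⟨m, rfl⟩ : ∃ m, k = m + 1 := ⟨k - 1, by omega⟩
  have h := two_le_sylvester m
  have he : Even (sylvester m * (sylvester m - 1)) := by
    rcases Nat.even_or_odd (sylvester m) with he | ho
    · exact he.mul_right _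
    · refine Even.mul_left ?_ _
      obtain ⟨j, hj⟩ := ho
      exact ⟨j, by omega⟩
  simpa only [sylvester] using he.add_one

theorem terminal_weights_are_positive_integers (n : ℕ) (hn : 3 ≤ n) :
    2 ∣ (sylvester (n - 1) - 1) ∧
    (∀ i, 2 ≤ i → i ≤ n - 1 →
      2 * sylvester (n - i) ∣ (sylvester (n - 1) - 1) * (sylvester (n - 1) - 2)) ∧
    2 ∣ ((sylvester (n - 1) - 1) * (sylvester (n - 1) - 2) / 2 - 1) ∧
    0 < (sylvester (n - 1) - 1) / 2 - 1 ∧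
    0 < (sylvester (n - 1) - 1) / 2 ∧
    (∀ i, 2 ≤ i → i ≤ n - 1 →
      0 < (sylvester (n - 1) - 1) * (sylvester (n - 1) - 2) / (2 * sylvester (n - i))) ∧
    0 < ((sylvester (n - 1) - 1) * (sylvester (n - 1) - 2) / 2 - 1) / 2 := by
  set s := sylvester (n - 1) with hs
  have hs7 : 7 ≤ s := seven_le_sylvester _ (by omega)
  have hsodd : Odd s := odd_sylvester _ (by omega)
  -- key divisibility: 2 * sylvester k ∣ s - 1 for 1 ≤ k < n - 1
  have key : ∀ k, 1 ≤ k → k < n - 1 → 2 * sylvester k ∣ s - 1 := by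
    intro k hk1 hk2
    rw [hs, sylvester_sub_one]
    have hsub : ({0, k} : Finset ℕ) ⊆ Finset.range (n - 1) := by
      intro x hx
      simp only [Finset.mem_insert, Finset.mem_singleton] at hx
      rcases hx with rfl | rfl <;> simp [Finset.mem_range] <;> omega
    have hd := Finset.prod_dvd_prod_of_subset _ _ sylvester hsub
    rwa [Finset.prod_pair (by omega : (0:ℕ) ≠ k), show sylvester 0 = 2 from rfl] at hd
  -- (s-1)/2 is odd
  obtain ⟨m, hm⟩ : ∃ m, s - 1 = 2 * m := by
    obtain ⟨j, hj⟩ := hsodd; exact ⟨j, by omega⟩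
  have hmodd : Odd m := by
    have hprod : s - 1 = (∏ i ∈ Finset.range (n - 2), sylvester (i + 1)) * sylvester 0 := by
      rw [hs, sylvester_sub_one, show n - 1 = (n - 2) + 1 by omega, Finset.prod_range_succ']
    have : m = ∏ i ∈ Finset.range (n - 2), sylvester (i + 1) := by
      rw [show sylvester 0 = 2 from rfl] at hprod; omega
    rw [this]
    exact Finset.prod_induction _ Odd (fun a b => Odd.mul) odd_one
      (fun i _ => odd_sylvester _ (by omega))
  have hm3 : 3 ≤ m := by
    rcases hmodd with ⟨j, hj⟩
    omega
  have hdiv2 : (s - 1) * (s - 2) / 2 = m * (s - 2) := by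
    rw [hm, mul_assoc, Nat.mul_div_cancel_left _ (by norm_num)]
  have hprod_odd : Odd (m * (s - 2)) := by
    refine hmodd.mul ?_
    obtain ⟨j, hj⟩ := hsodd
    exact ⟨j - 1, by omega⟩
  have hms : 15 ≤ m * (s - 2) := by
    calc 15 = 3 * 5 := by norm_num
    _ ≤ m * (s - 2) := Nat.mul_le_mul hm3 (by omega)
  refine ⟨⟨m, hm⟩, ?_, ?_, ?_, ?_, ?_, ?_⟩
  · intro i hi2 hin
    exact (key (n - i) (by omega) (by omega)).mul_right _
  · rw [hdiv2]
    obtain ⟨j, hj⟩ := hprod_odd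
    exact ⟨j, by omega⟩
  · rw [hm, Nat.mul_div_cancel_left _ (by norm_num : 0 < 2)]; omega
  · rw [hm, Nat.mul_div_cancel_left _ (by norm_num : 0 < 2)]; omega
  · intro i hi2 hin
    have hd : 2 * sylvester (n - i) ∣ (s - 1) * (s - 2) :=
      (key (n - i) (by omega) (by omega)).mul_right _
    have hpos : 0 < (s - 1) * (s - 2) := Nat.mul_pos (by omega) (by omega)
    exact Nat.div_pos (Nat.le_of_dvd hpos hd)
      (by have := two_le_sylvester (n - i); omega)
  · rw [hdiv2]
    exact Nat.div_pos (by omega) (by norm_num)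
end

section
/- For n ≥ 3, with weights as in the terminal construction (a_0 = (s_{n-1}-1)/2 - 1, a_1 = (s_{n-1}-1)/2, a_i = (s_{n-1}-1)(s_{n-1}-2)/(2 s_{n-i}) for 2 ≤ i ≤ n-1, a_n = ((s_{n-1}-1)(s_{n-1}-2)/2 - 1)/2), one has a_0 + a_1 + ... + a_n = (s_{n-1}-1)^2/2 - 1. -/
lemma syl_ge_two : ∀ m, 2 ≤ sylvester m
  | 0 => le_refl 2
  | (m+1) => by
      have h := syl_ge_two m
      obtain ⟨t, ht⟩ : ∃ t, sylvester m = t + 2 := ⟨sylvester m - 2, by omega⟩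
      show 2 ≤ sylvester m * (sylvester m - 1) + 1
      rw [ht]
      have : t + 2 - 1 = t + 1 := by omega
      rw [this]
      nlinarith

lemma syl_sub_one : ∀ m, sylvester m - 1 = ∏ j ∈ Finset.range m, sylvester j
  | 0 => by simp [sylvester]
  | (m+1) => by
      have h := syl_sub_one m
      rw [Finset.prod_range_succ, ← h]
      show sylvester m * (sylvester m - 1) + 1 - 1 = _
      ring_nf
      omega

lemma syl_dvd {k m : ℕ} (h : k < m) : sylvester k ∣ sylvester m - 1 := by
  rw [syl_sub_one]
  exact Finset.dvd_prod_of_mem _ (Finset.mem_range.2 h)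

lemma syl_dvd2 {k m : ℕ} (h1 : 1 ≤ k) (h : k < m) : 2 * sylvester k ∣ sylvester m - 1 := by
  rw [syl_sub_one]
  have : ({0, k} : Finset ℕ) ⊆ Finset.range m := by
    intro x hx; simp at hx; rcases hx with rfl | rfl <;> simp <;> omega
  have h2 := Finset.prod_dvd_prod_of_subset _ _ sylvester this
  rwa [Finset.prod_pair (by omega)] at h2

lemma sumA : ∀ m, ∑ k ∈ Finset.range m, (sylvester m - 1) / sylvester k = sylvester m - 2
  | 0 => by simp [sylvester]
  | (m+1) => by
      have ih := sumA m
      have h2 := syl_ge_two m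
      rw [Finset.sum_range_succ]
      have hlast : (sylvester (m+1) - 1) / sylvester m = sylvester m - 1 := by
        show (sylvester m * (sylvester m - 1) + 1 - 1) / sylvester m = _
        rw [Nat.add_sub_cancel, Nat.mul_div_cancel_left _ (by omega)]
      have hterm : ∀ k ∈ Finset.range m,
          (sylvester (m+1) - 1) / sylvester k
            = sylvester m * ((sylvester m - 1) / sylvester k) := by
        intro k hk
        show (sylvester m * (sylvester m - 1) + 1 - 1) / sylvester k = _
        rw [Nat.add_sub_cancel, Nat.mul_div_assoc _ (syl_dvd (Finset.mem_range.1 hk))]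
      rw [Finset.sum_congr rfl hterm, ← Finset.mul_sum, ih, hlast]
      show _ = sylvester m * (sylvester m - 1) + 1 - 2
      obtain ⟨t, ht⟩ : ∃ t, sylvester m = t + 2 := ⟨sylvester m - 2, by omega⟩
      rw [ht]
      have e1 : (t+2) * (t+2-2) = t*t + 2*t := by
        have : t+2-2 = t := by omega
        rw [this]; ring
      have e2 : (t+2) * (t+2-1) = t*t+3*t+2 := by
        have : t+2-1 = t+1 := by omega
        rw [this]; ring
      omega

lemma syl_mod4 : ∀ m, 2 ≤ m → sylvester m % 4 = 3
  | 2, _ => by norm_num [sylvester]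
  | (m+3), _ => by
      have ih := syl_mod4 (m+2) (by omega)
      have h2 := syl_ge_two (m+2)
      show (sylvester (m+2) * (sylvester (m+2) - 1) + 1) % 4 = 3
      obtain ⟨t, ht⟩ : ∃ t, sylvester (m+2) = 4*t + 3 := ⟨sylvester (m+2) / 4, by omega⟩
      rw [ht]
      have : (4*t+3) * (4*t+3-1) + 1 = 4*(4*t*t+5*t+1) + 3 := by
        have h : 4*t+3-1 = 4*t+2 := by omega
        rw [h]; ring
      omega
theorem terminal_weights_sum (n : ℕ) (hn : 3 ≤ n) :
    ((sylvester (n - 1) - 1) / 2 - 1) + (sylvester (n - 1) - 1) / 2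
      + (∑ i ∈ Finset.Icc 2 (n - 1),
          (sylvester (n - 1) - 1) * (sylvester (n - 1) - 2) / (2 * sylvester (n - i)))
      + ((sylvester (n - 1) - 1) * (sylvester (n - 1) - 2) / 2 - 1) / 2
      = (sylvester (n - 1) - 1) ^ 2 / 2 - 1 := by
  set m := n - 1 with hm
  have hm2 : 2 ≤ m := by omega
  set s := sylvester m with hs
  set P := s - 1 with hP
  -- reindex sum
  have hre : ∑ i ∈ Finset.Icc 2 (n - 1), P * (s - 2) / (2 * sylvester (n - i))
      = ∑ k ∈ Finset.Icc 1 (m - 1), P * (s - 2) / (2 * sylvester k) := by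
    apply Finset.sum_bij' (fun i _ => n - i) (fun k _ => n - k)
    · intro a ha; simp only [Finset.mem_Icc] at *; omega
    · intro a ha; simp only [Finset.mem_Icc] at *; omega
    · intro a ha; simp only [Finset.mem_Icc] at *; omega
    · intro a ha; simp only [Finset.mem_Icc] at *; omega
    · intro a ha; rfl
  rw [hre]
  -- rewrite each term
  have hterm : ∀ k ∈ Finset.Icc 1 (m - 1),
      P * (s - 2) / (2 * sylvester k) = (s - 2) * (P / (2 * sylvester k)) := by
    intro k hk
    simp only [Finset.mem_Icc] at hk
    rw [mul_comm P (s - 2), Nat.mul_div_assoc _ (syl_dvd2 hk.1 (by omega))]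
  rw [Finset.sum_congr rfl hterm, ← Finset.mul_sum]
  -- evaluate the inner sum
  have hA := sumA m
  have hsplit : Finset.range m = insert 0 (Finset.Icc 1 (m - 1)) := by
    ext x; simp only [Finset.mem_range, Finset.mem_insert, Finset.mem_Icc]; omega
  rw [hsplit, Finset.sum_insert (by simp)] at hA
  have hdouble : ∀ k ∈ Finset.Icc 1 (m - 1),
      P / sylvester k = 2 * (P / (2 * sylvester k)) := by
    intro k hk
    simp only [Finset.mem_Icc] at hk
    obtain ⟨t, ht⟩ := syl_dvd2 hk.1 (show k < m by omega)
    have hkpos := syl_ge_two k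
    rw [← hP] at ht
    rw [ht, Nat.mul_div_cancel_left _ (by omega), mul_comm 2 (sylvester k), mul_assoc,
      Nat.mul_div_cancel_left _ (by omega)]
  rw [Finset.sum_congr rfl hdouble, ← Finset.mul_sum] at hA
  -- arithmetic
  have hmod := syl_mod4 m hm2
  have h2 := syl_ge_two m
  obtain ⟨r, hr⟩ : ∃ r, s = 4 * r + 3 := ⟨s / 4, by omega⟩
  set Ssum := ∑ k ∈ Finset.Icc 1 (m - 1), P / (2 * sylvester k) with hSsum
  have hSsumr : Ssum = r := by
    have h0 : sylvester 0 = 2 := rfl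
    rw [h0] at hA
    omega
  rw [hSsumr]
  have e1 : s - 2 = 4 * r + 1 := by omega
  have e2 : P = 4 * r + 2 := by omega
  rw [e1, e2]
  have hB : (4 * r + 1) * r = 4 * (r * r) + r := by ring
  have hC : (4 * r + 2) * (4 * r + 1) = 16 * (r * r) + 12 * r + 2 := by ring
  have hD : (4 * r + 2) ^ 2 = 16 * (r * r) + 16 * r + 4 := by ring
  omega
end

section
/- For n ≥ 3 and the terminal construction weights, a_2 + a_3 + ... + a_{n-1} + a_0 = a_n; that is, ∑_{i=2}^{n-1} (s_{n-1}-1)(s_{n-1}-2)/(2 s_{n-i}) + ((s_{n-1}-1)/2 - 1) = ((s_{n-1}-1)(s_{n-1}-2)/2 - 1)/2. -/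
lemma sylvester_two_le (n : ℕ) : 2 ≤ sylvester n := by
  induction n with
  | zero => simp [sylvester]
  | succ n ih =>
    show 2 ≤ sylvester n * (sylvester n - 1) + 1
    have := Nat.mul_le_mul ih (show 1 ≤ sylvester n - 1 by omega)
    omega

lemma sylvester_succ_sub_one (n : ℕ) :
    sylvester (n + 1) - 1 = sylvester n * (sylvester n - 1) := by
  simp [sylvester]

lemma sylvester_odd (n : ℕ) : sylvester (n + 1) % 2 = 1 := by
  have h := sylvester_two_le n
  show (sylvester n * (sylvester n - 1) + 1) % 2 = 1
  obtain ⟨m, hm | hm⟩ : ∃ m, sylvester n = 2 * m ∨ sylvester n = 2 * m + 1 :=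
    ⟨sylvester n / 2, by omega⟩
  · rw [hm]
    have : 2 * m * (2 * m - 1) + 1 = 2 * (m * (2 * m - 1)) + 1 := by ring
    omega
  · rw [hm]
    have : (2 * m + 1) * (2 * m + 1 - 1) + 1 = 2 * ((2 * m + 1) * m) + 1 := by
      have : 2 * m + 1 - 1 = 2 * m := by omega
      rw [this]; ring
    omega

lemma sylvester_mod4 (k : ℕ) : sylvester (k + 2) % 4 = 3 := by
  induction k with
  | zero => decide
  | succ k ih =>
    have h2 := sylvester_two_le (k + 2)
    obtain ⟨m, hm⟩ : ∃ m, sylvester (k + 2) = 4 * m + 3 := ⟨sylvester (k + 2) / 4, by omega⟩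
    show (sylvester (k + 2) * (sylvester (k + 2) - 1) + 1) % 4 = 3
    rw [hm]
    have : (4 * m + 3) * (4 * m + 3 - 1) + 1 = 4 * (4 * m * m + 5 * m + 1) + 3 := by
      have : 4 * m + 3 - 1 = 4 * m + 2 := by omega
      rw [this]; ring
    omega

lemma sylvester_prod (k : ℕ) :
    ∏ j ∈ Finset.range (k + 1), sylvester j = sylvester (k + 1) - 1 := by
  induction k with
  | zero => simp [sylvester]
  | succ k ih =>
    rw [Finset.prod_range_succ, ih, sylvester_succ_sub_one]
    exact Nat.mul_comm _ _

lemma sylvester_dvd (j k : ℕ) (h : j ≤ k) : sylvester j ∣ sylvester (k + 1) - 1 := by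
  rw [← sylvester_prod]
  exact Finset.dvd_prod_of_mem _ (by simp; omega)

lemma sylvester_sum_div (k : ℕ) (M : ℕ) (hM : (sylvester (k + 1) - 1) ∣ M) :
    ∑ j ∈ Finset.Icc 1 k, M / sylvester j + M / (sylvester (k + 1) - 1) = M / 2 := by
  induction k generalizing M with
  | zero => simp [sylvester]
  | succ k ih =>
    simp only [show k + 1 + 1 = k + 2 from rfl] at hM ⊢
    obtain ⟨q, hq⟩ := hM
    have hs := sylvester_two_le (k + 1)
    have hsub := sylvester_succ_sub_one (k + 1)
    rw [Finset.sum_Icc_succ_top (by omega : 1 ≤ k + 1)]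
    have h1 : M / sylvester (k + 1) = (sylvester (k + 1) - 1) * q := by
      rw [hq, hsub, mul_assoc, Nat.mul_div_cancel_left _ (by omega : 0 < sylvester (k + 1))]
    have h2 : M / (sylvester (k + 2) - 1) = q := by
      rw [hq, Nat.mul_div_cancel_left _ (by have := sylvester_two_le (k + 2); omega)]
    have hdvd : (sylvester (k + 1) - 1) ∣ M := by
      refine ⟨sylvester (k + 1) * q, ?_⟩
      rw [hq, hsub]; ring
    have h3 : M / (sylvester (k + 1) - 1) = sylvester (k + 1) * q := by
      obtain ⟨q', hq'⟩ := hdvd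
      have hpos : 0 < sylvester (k + 1) - 1 := by omega
      have : (sylvester (k + 1) - 1) * q' = (sylvester (k + 1) - 1) * (sylvester (k + 1) * q) := by
        rw [← hq', hq, hsub]; ring
      rw [hq', Nat.mul_div_cancel_left _ hpos]
      exact Nat.eq_of_mul_eq_mul_left hpos this
    have hihm := ih M hdvd
    rw [h3] at hihm
    rw [h1, h2]
    have key : (sylvester (k + 1) - 1) * q + q = sylvester (k + 1) * q := by
      rw [Nat.sub_one_mul]
      have : q ≤ sylvester (k + 1) * q := Nat.le_mul_of_pos_left q (by omega)
      omega
    omega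

theorem terminal_weights_an_relation (n : ℕ) (hn : 3 ≤ n) :
    (∑ i ∈ Finset.Icc 2 (n - 1),
        (sylvester (n - 1) - 1) * (sylvester (n - 1) - 2) / (2 * sylvester (n - i)))
      + ((sylvester (n - 1) - 1) / 2 - 1)
      = ((sylvester (n - 1) - 1) * (sylvester (n - 1) - 2) / 2 - 1) / 2 := by
  obtain ⟨k, rfl⟩ : ∃ k, n = k + 3 := ⟨n - 3, by omega⟩
  simp only [show k + 3 - 1 = k + 2 by omega]
  set s := sylvester (k + 2) with hsdef
  have hs4 : s % 4 = 3 := sylvester_mod4 k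
  have hs2 : 2 ≤ s := sylvester_two_le _
  -- reindex the sum
  have hre : ∑ i ∈ Finset.Icc 2 (k + 2), (s - 1) * (s - 2) / (2 * sylvester (k + 3 - i))
      = ∑ j ∈ Finset.Icc 1 (k + 1), (s - 1) * (s - 2) / (2 * sylvester j) := by
    apply Finset.sum_nbij' (fun i => k + 3 - i) (fun j => k + 3 - j) <;>
      intros a ha <;> simp only [Finset.mem_Icc] at * <;> omega
  -- per-index facts
  set Qf : ℕ → ℕ := fun j => (s - 1) / 2 / sylvester j with hQf
  have hper : ∀ j ∈ Finset.Icc 1 (k + 1),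
      (s - 1) * (s - 2) / (2 * sylvester j) = (s - 2) * Qf j ∧
      (s - 1) / sylvester j = 2 * Qf j := by
    intro j hj
    simp only [Finset.mem_Icc] at hj
    obtain ⟨j', rfl⟩ : ∃ j', j = j' + 1 := ⟨j - 1, by omega⟩
    have hd2 := sylvester_two_le (j' + 1)
    have hodd := sylvester_odd j'
    have hdvd : sylvester (j' + 1) ∣ s - 1 := sylvester_dvd (j' + 1) (k + 1) (by omega)
    have heven : s - 1 = 2 * ((s - 1) / 2) := by omega
    have hdvd2 : sylvester (j' + 1) ∣ (s - 1) / 2 := by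
      obtain ⟨c, hc⟩ := hdvd
      obtain ⟨q, hq' | hq'⟩ : ∃ c', c = 2 * c' ∨ c = 2 * c' + 1 := ⟨c / 2, by omega⟩
      · refine ⟨q, ?_⟩
        have : s - 1 = 2 * (sylvester (j' + 1) * q) := by rw [hc, hq']; ring
        omega
      · exfalso
        have : s - 1 = 2 * (sylvester (j' + 1) * q) + sylvester (j' + 1) := by
          rw [hc, hq']; ring
        omega
    obtain ⟨q, hq⟩ := hdvd2
    have hQval : Qf (j' + 1) = q := by
      rw [hQf]; simp only
      rw [hq, Nat.mul_div_cancel_left _ (by omega : 0 < sylvester (j' + 1))]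
    have hs1 : s - 1 = 2 * (sylvester (j' + 1) * q) := by omega
    constructor
    · rw [hQval, hs1]
      have : 2 * (sylvester (j' + 1) * q) * (s - 2)
          = (2 * sylvester (j' + 1)) * ((s - 2) * q) := by ring
      rw [this, Nat.mul_div_cancel_left _ (by omega : 0 < 2 * sylvester (j' + 1))]
    · rw [hQval, hs1]
      have : 2 * (sylvester (j' + 1) * q) = sylvester (j' + 1) * (2 * q) := by ring
      rw [this, Nat.mul_div_cancel_left _ (by omega : 0 < sylvester (j' + 1))]
  -- the telescoping sum
  have hL := sylvester_sum_div (k + 1) (s - 1) dvd_rfl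
  rw [Nat.div_self (by omega : 0 < s - 1)] at hL
  have hQsum : ∑ j ∈ Finset.Icc 1 (k + 1), (s - 1) / sylvester j
      = 2 * ∑ j ∈ Finset.Icc 1 (k + 1), Qf j := by
    rw [Finset.mul_sum]
    exact Finset.sum_congr rfl fun j hj => (hper j hj).2
  set T := ∑ j ∈ Finset.Icc 1 (k + 1), Qf j with hT
  rw [hQsum] at hL
  -- main sum in closed form
  have hmain : ∑ i ∈ Finset.Icc 2 (k + 2), (s - 1) * (s - 2) / (2 * sylvester (k + 3 - i))
      = (s - 2) * T := by
    rw [hre, hT, Finset.mul_sum]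
    exact Finset.sum_congr rfl fun j hj => (hper j hj).1
  rw [hmain]
  have hsT : s = 4 * T + 3 := by omega
  rw [hsT]
  have e1 : (4 * T + 3 - 1) * (4 * T + 3 - 2) = 2 * (8 * (T * T) + 6 * T + 1) := by
    have h1 : 4 * T + 3 - 1 = 4 * T + 2 := by omega
    have h2 : 4 * T + 3 - 2 = 4 * T + 1 := by omega
    rw [h1, h2]; ring
  have e2 : (4 * T + 3 - 2) * T = 4 * (T * T) + T := by
    have h2 : 4 * T + 3 - 2 = 4 * T + 1 := by omega
    rw [h2]; ring
  rw [e1, e2]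
  omega
end

section
/- For n ≥ 3 and the terminal construction weights, gcd(a_1, a_n) = 1, where a_1 = (s_{n-1}-1)/2 and a_n = ((s_{n-1}-1)(s_{n-1}-2)/2 - 1)/2. -/
lemma sylvester_mod_four (m : ℕ) : sylvester (m + 1) % 4 = 3 := by
  induction m with
  | zero => rfl
  | succ k ih =>
    have h3 : 3 ≤ sylvester (k + 1) := by omega
    obtain ⟨q, hq⟩ : ∃ q, sylvester (k + 1) = 4 * q + 3 :=
      ⟨sylvester (k + 1) / 4, by omega⟩
    show (sylvester (k + 1) * (sylvester (k + 1) - 1) + 1) % 4 = 3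
    rw [hq]
    have : (4 * q + 3) * (4 * q + 3 - 1) + 1 = 4 * (4 * q ^ 2 + 5 * q + 1) + 3 := by
      have : 4 * q + 3 - 1 = 4 * q + 2 := by omega
      rw [this]; ring
    rw [this]
    omega

theorem terminal_weights_a1_an_coprime (n : ℕ) (hn : 3 ≤ n) :
    Nat.gcd ((sylvester (n - 1) - 1) / 2)
      (((sylvester (n - 1) - 1) * (sylvester (n - 1) - 2) / 2 - 1) / 2) = 1 := by
  have hmod : sylvester (n - 1) % 4 = 3 := by
    have : n - 1 = (n - 2) + 1 := by omega
    rw [this]; exact sylvester_mod_four (n - 2)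
  obtain ⟨q, hq⟩ : ∃ q, sylvester (n - 1) = 4 * q + 3 :=
    ⟨sylvester (n - 1) / 4, by omega⟩
  rw [hq]
  have e1 : (4 * q + 3 - 1) / 2 = 2 * q + 1 := by omega
  have e2 : ((4 * q + 3 - 1) * (4 * q + 3 - 2) / 2 - 1) / 2 = q * (4 * q + 3) := by
    have h1 : 4 * q + 3 - 1 = 4 * q + 2 := by omega
    have h2 : 4 * q + 3 - 2 = 4 * q + 1 := by omega
    rw [h1, h2]
    have h3 : (4 * q + 2) * (4 * q + 1) = 2 * (8 * q ^ 2 + 6 * q + 1) := by ring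
    rw [h3, Nat.mul_div_cancel_left _ (by norm_num)]
    have h4 : 8 * q ^ 2 + 6 * q + 1 - 1 = 2 * (q * (4 * q + 3)) := by
      rw [Nat.add_sub_cancel]; ring
    rw [h4, Nat.mul_div_cancel_left _ (by norm_num)]
  rw [e1, e2]
  have hc1 : Nat.Coprime (2 * q + 1) q := by
    have h : 2 * q + 1 = q * 2 + 1 := by ring
    rw [h]; simp [Nat.coprime_mul_left_add_left]
  have hc2 : Nat.Coprime (2 * q + 1) (4 * q + 3) := by
    have h : 4 * q + 3 = (2 * q + 1) * 2 + 1 := by ring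
    rw [h]; simp [Nat.coprime_mul_left_add_left]
  exact hc1.mul_right hc2
end

section
/- For n ≥ 4, (s_{n-1} - 1)^2/2 - 1 > 2^(2^(n-1)), where s_k is the Sylvester sequence. -/
lemma sylvester_lb_s15 : ∀ k, 3 ≤ k → 2 * 2 ^ (2 ^ (k - 1)) ≤ sylvester k - 1 := by
  intro k hk
  induction k, hk using Nat.le_induction with
  | base => decide
  | succ k hk ih =>
    have hp : 1 ≤ 2 ^ (2 ^ (k - 1)) := Nat.one_le_two_pow
    have h1 : 2 ≤ sylvester k - 1 := le_trans (by omega) ih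
    have hs : sylvester (k + 1) - 1 = sylvester k * (sylvester k - 1) := by
      simp [sylvester]
    rw [hs]
    have h2 : (sylvester k - 1) * (sylvester k - 1) ≤ sylvester k * (sylvester k - 1) :=
      Nat.mul_le_mul_right _ (Nat.sub_le _ _)
    have hk1 : 2 ^ (k - 1) + 2 ^ (k - 1) = 2 ^ (k + 1 - 1) := by
      have : k - 1 + 1 = k := by omega
      rw [Nat.add_sub_cancel]
      conv_rhs => rw [← this, pow_succ]
      ring
    calc 2 * 2 ^ (2 ^ (k + 1 - 1))
        = 2 * 2 ^ (2 ^ (k - 1) + 2 ^ (k - 1)) := by rw [hk1]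
      _ ≤ 4 * 2 ^ (2 ^ (k - 1) + 2 ^ (k - 1)) :=
          Nat.mul_le_mul_right _ (by norm_num)
      _ = (2 * 2 ^ (2 ^ (k - 1))) * (2 * 2 ^ (2 ^ (k - 1))) := by ring
      _ ≤ (sylvester k - 1) * (sylvester k - 1) := Nat.mul_le_mul ih ih
      _ ≤ sylvester k * (sylvester k - 1) := h2

theorem terminal_index_gt_doubly_exponential (n : ℕ) (hn : 4 ≤ n) :
    (sylvester (n - 1) - 1) ^ 2 / 2 - 1 > 2 ^ (2 ^ (n - 1)) := by
  set m := n - 1 with hm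
  have hm3 : 3 ≤ m := by omega
  have h := sylvester_lb_s15 m hm3
  have hsq : 4 * 2 ^ (2 ^ m) ≤ (sylvester m - 1) ^ 2 := by
    have hpow : 2 ^ (m - 1) + 2 ^ (m - 1) = 2 ^ m := by
      have : m - 1 + 1 = m := by omega
      conv_rhs => rw [← this, pow_succ]
      ring
    calc 4 * 2 ^ (2 ^ m) = (2 * 2 ^ (2 ^ (m - 1))) ^ 2 := by
          rw [← hpow]; ring
      _ ≤ (sylvester m - 1) ^ 2 := Nat.pow_le_pow_left h 2
  have hdiv : 2 * 2 ^ (2 ^ m) ≤ (sylvester m - 1) ^ 2 / 2 := by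
    rw [Nat.le_div_iff_mul_le (by norm_num)]
    calc 2 * 2 ^ (2 ^ m) * 2 = 4 * 2 ^ (2 ^ m) := by ring
      _ ≤ _ := hsq
  have hX : 2 ≤ 2 ^ (2 ^ m) := Nat.one_lt_two_pow (by positivity)
  omega
end
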